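/- If (A, B, ε, μ_A, l, r) is a Frobenius structure, then the multiplication μ_B := ⊸ʳ ∘ (B ⊗ r⁻¹) = ⊸ˡ ∘ (l⁻¹ ⊗ B) on B is associative, so (B, μ_B) is a semigroup. -/

import Mathlib

open CategoryTheory MonoidalCategory

variable {C : Type*} [Category C] [MonoidalCategory C] [SymmetricCategory C]

/-- `ε : A ⊗ B ⟶ N` is a dual pairing (w.r.t. the fixed object `N`). -/
def IsDualPairing (N : C) {A B : C} (ε : A ⊗ B ⟶ N) : Prop :=
  (∀ X : C, Function.Bijective (fun f : X ⟶ B => (A ◁ f) ≫ ε)) ∧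
  (∀ X : C, Function.Bijective (fun g : X ⟶ A => (g ▷ B) ≫ ε))

/-- the defining equation of the left action `⊸ˡ : A ⊗ B ⟶ B` of a magma
`(A, μ)` on its dual `B`: `ε ∘ (A ⊗ ⊸ˡ) = ε ∘ (μ ⊗ B)` (modulo associators). -/
def LactSpec (N : C) {A B : C} (ε : A ⊗ B ⟶ N) (μ : A ⊗ A ⟶ A)
    (lact : A ⊗ B ⟶ B) : Prop :=
  (A ◁ lact) ≫ ε = (α_ A A B).inv ≫ (μ ▷ B) ≫ ε

/-- the defining equation of the right action `⊸ʳ : B ⊗ A ⟶ B`: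
`ε ∘ (A ⊗ ⊸ʳ) = ε ∘ ((μ ∘ σ_{A,A}) ⊗ B) ∘ (symmetry A⊗B⊗A → A⊗A⊗B)`. -/
def RactSpec (N : C) {A B : C} (ε : A ⊗ B ⟶ N) (μ : A ⊗ A ⟶ A)
    (ract : B ⊗ A ⟶ B) : Prop :=
  (A ◁ ract) ≫ ε =
    (A ◁ (β_ B A).hom) ≫ (α_ A A B).inv ≫ (((β_ A A).hom ≫ μ) ▷ B) ≫ ε

/-- A Frobenius structure `(A, B, ε, μ, l, r)` (with the actions `lact`, `ract`
made explicit): `(A, B, ε)` is a dual pairing, `(A, μ)` is a semigroup, `l` and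
`r` are invertible adjoint maps, and the contraposition law
`⊸ˡ ∘ (A ⊗ r) = ⊸ʳ ∘ (l ⊗ A)` holds. -/
def IsFrobenius (N : C) {A B : C} (ε : A ⊗ B ⟶ N) (μ : A ⊗ A ⟶ A)
    (l r : A ⟶ B) (lact : A ⊗ B ⟶ B) (ract : B ⊗ A ⟶ B) : Prop :=
  IsDualPairing N ε ∧
  ((μ ▷ A) ≫ μ = (α_ A A A).hom ≫ (A ◁ μ) ≫ μ) ∧
  LactSpec N ε μ lact ∧ RactSpec N ε μ ract ∧
  IsIso l ∧ IsIso r ∧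
  ((A ◁ r) ≫ ε = (β_ A A).hom ≫ (A ◁ l) ≫ ε) ∧
  ((A ◁ r) ≫ lact = (l ▷ A) ≫ ract)

/-- The two actions of a Frobenius structure commute (B is a bimodule). -/
theorem frobenius_actions_comm (N : C) {A B : C} (ε : A ⊗ B ⟶ N)
    (μ : A ⊗ A ⟶ A) (lact : A ⊗ B ⟶ B) (ract : B ⊗ A ⟶ B)
    (hinj : ∀ X : C, Function.Injective (fun f : X ⟶ B => (A ◁ f) ≫ ε))
    (hμ : (μ ▷ A) ≫ μ = (α_ A A A).hom ≫ (A ◁ μ) ≫ μ)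
    (hl : LactSpec N ε μ lact) (hr : RactSpec N ε μ ract) :
    (A ◁ ract) ≫ lact = (α_ A B A).inv ≫ (lact ▷ A) ≫ ract := by
  unfold LactSpec at hl
  unfold RactSpec at hr
  apply hinj (A ⊗ (B ⊗ A))
  simp only [MonoidalCategory.whiskerLeft_comp, Category.assoc, hl]
  -- LHS transformations
  rw [associator_inv_naturality_right_assoc, whisker_exchange_assoc, hr,
    ← whisker_exchange_assoc, associator_inv_naturality_left_assoc,
    ← comp_whiskerRight_assoc]
  -- RHS transformations
  rw [← MonoidalCategory.whiskerLeft_comp_assoc (f := lact ▷ A),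
    BraidedCategory.braiding_naturality_left,
    MonoidalCategory.whiskerLeft_comp_assoc,
    associator_inv_naturality_right_assoc, whisker_exchange_assoc, hl,
    associator_inv_naturality_left_assoc, ← comp_whiskerRight_assoc]
  rw [BraidedCategory.braiding_naturality_left_assoc (f := μ)]
  rw [comp_whiskerRight_assoc (f := (β_ A A).hom), hμ]
  simp only [BraidedCategory.braiding_tensor_left_hom, MonoidalCategory.comp_whiskerRight,
    MonoidalCategory.whiskerLeft_comp, Category.assoc]
  coherence

/-- for a Frobenius structure `(A, B, ε, μ, l, r)`, the
multiplication `μ_B := ⊸ʳ ∘ (B ⊗ r⁻¹)` on `B` is associative. -/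
theorem frobenius_dual_mul_assoc (N : C) {A B : C} (ε : A ⊗ B ⟶ N)
    (μ : A ⊗ A ⟶ A) (l r : A ⟶ B) (lact : A ⊗ B ⟶ B) (ract : B ⊗ A ⟶ B)
    (hF : IsFrobenius N ε μ l r lact ract)
    (ri : B ⟶ A) (hri₁ : r ≫ ri = 𝟙 A) (hri₂ : ri ≫ r = 𝟙 B)
    (li : B ⟶ A) (hli₁ : l ≫ li = 𝟙 A) (hli₂ : li ≫ l = 𝟙 B) :
    (((B ◁ ri) ≫ ract) ▷ B) ≫ ((B ◁ ri) ≫ ract) =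
      (α_ B B B).hom ≫ (B ◁ ((B ◁ ri) ≫ ract)) ≫ ((B ◁ ri) ≫ ract) := by
  obtain ⟨⟨hinj, -⟩, hμ, hl, hr, -, -, -, hcontra⟩ := hF
  have hcomm : (A ◁ ract) ≫ lact = (α_ A B A).inv ≫ (lact ▷ A) ≫ ract :=
    frobenius_actions_comm N ε μ lact ract (fun X => (hinj X).injective) hμ hl hr
  -- `μ_B` can also be written via the left action:
  have hm : (B ◁ ri) ≫ ract = (li ▷ B) ≫ lact := by
    calc (B ◁ ri) ≫ ract
        = (li ▷ B) ≫ (A ◁ ri) ≫ (l ▷ A) ≫ ract := by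
          rw [← whisker_exchange_assoc, ← comp_whiskerRight_assoc, hli₂,
            MonoidalCategory.id_whiskerRight, Category.id_comp]
      _ = (li ▷ B) ≫ (A ◁ ri) ≫ (A ◁ r) ≫ lact := by rw [hcontra]
      _ = (li ▷ B) ≫ lact := by
          rw [← MonoidalCategory.whiskerLeft_comp_assoc, hri₂,
            MonoidalCategory.whiskerLeft_id, Category.id_comp]
  calc (((B ◁ ri) ≫ ract) ▷ B) ≫ ((B ◁ ri) ≫ ract)
      = ((li ▷ B) ▷ B) ≫ (lact ▷ B) ≫ (B ◁ ri) ≫ ract := by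
        rw [hm, MonoidalCategory.comp_whiskerRight, Category.assoc]
    _ = ((li ▷ B) ▷ B) ≫ ((A ⊗ B) ◁ ri) ≫ (lact ▷ A) ≫ ract := by
        rw [whisker_exchange_assoc]
    _ = (α_ B B B).hom ≫ (li ▷ (B ⊗ B)) ≫ (A ◁ (B ◁ ri)) ≫ (α_ A B A).inv ≫
          (lact ▷ A) ≫ ract := by
        rw [associator_inv_naturality_right_assoc,
          associator_inv_naturality_left_assoc, Iso.hom_inv_id_assoc]
    _ = (α_ B B B).hom ≫ (li ▷ (B ⊗ B)) ≫ (A ◁ ((B ◁ ri) ≫ ract)) ≫ lact := by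
        rw [MonoidalCategory.whiskerLeft_comp, Category.assoc, hcomm]
    _ = (α_ B B B).hom ≫ (B ◁ ((B ◁ ri) ≫ ract)) ≫ ((B ◁ ri) ≫ ract) := by
        rw [hm, whisker_exchange_assoc]
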